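/- In a connected (P_5, claw)-free graph G, every vertex is at distance at most 3 from any fixed vertex u, and for any vertex v at distance i from u, the set of neighbors of v at distance i+1 from u contains no stable set of size 3. -/

import Mathlib

open SimpleGraph

/-- `G` contains no induced subgraph isomorphic to `H`. -/
def HFree {W V : Type*} (H : SimpleGraph W) (G : SimpleGraph V) : Prop :=
  IsEmpty (H ↪g G)

/-- `G` is `k`-vertex-critical: `χ(G) = k` and deleting any vertex decreases
the chromatic number below `k`. -/
def IsKVertexCritical {V : Type*} (G : SimpleGraph V) (k : ℕ) : Prop :=
  G.chromaticNumber = k ∧ ∀ v : V, (G.induce {v}ᶜ).chromaticNumber < k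

/-- The star `K_{1,s}`: center `0`, leaves `1, …, s`. -/
def starGraph (s : ℕ) : SimpleGraph (Fin (s + 1)) :=
  SimpleGraph.fromRel (fun i _ => (i : ℕ) = 0)

/-- `K_{1,s} + P_1`: the disjoint union of the star `K_{1,s}`
(center `0`, leaves `1, …, s`) and the isolated vertex `s + 1`. -/
def starPlusP1 (s : ℕ) : SimpleGraph (Fin (s + 2)) :=
  SimpleGraph.fromRel (fun i j => (i : ℕ) = 0 ∧ (j : ℕ) ≠ 0 ∧ (j : ℕ) ≤ s)

/-- The complement of `K_3 + 2P_1`: vertices `0,1,2` pairwise nonadjacent,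
vertices `3,4` adjacent to everything else. -/
def coK3Plus2P1 : SimpleGraph (Fin 5) :=
  SimpleGraph.fromRel (fun i j => 3 ≤ (i : ℕ) ∨ 3 ≤ (j : ℕ))

private lemma dist_getVert_right {V : Type*} {G : SimpleGraph V} :
    ∀ {u v : V} (p : G.Walk u v) (i : ℕ), G.dist (p.getVert i) v ≤ p.length - i := by
  intro u v p
  induction p with
  | nil => intro i; simp [SimpleGraph.Walk.getVert_of_length_le]
  | @cons a b c h q ih =>
    intro i
    cases i with
    | zero =>
      simpa using SimpleGraph.dist_le (SimpleGraph.Walk.cons h q)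
    | succ n =>
      simpa [SimpleGraph.Walk.getVert_cons_succ, Nat.succ_sub_succ] using ih n

theorem stmt7 {V : Type*} [Fintype V] (G : SimpleGraph V) (hconn : G.Connected)
    (hP5 : HFree (pathGraph 5) G) (hclaw : HFree (_root_.starGraph 3) G) (u : V) :
    (∀ v : V, G.dist u v ≤ 3) ∧
    (∀ v : V, ∀ i : ℕ, G.dist u v = i →
      ¬ ∃ a b c : V, a ≠ b ∧ a ≠ c ∧ b ≠ c ∧
        (G.Adj v a ∧ G.dist u a = i + 1) ∧
        (G.Adj v b ∧ G.dist u b = i + 1) ∧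
        (G.Adj v c ∧ G.dist u c = i + 1) ∧
        ¬ G.Adj a b ∧ ¬ G.Adj a c ∧ ¬ G.Adj b c) := by
  have hstep : ∀ x y : V, G.Adj x y → G.dist u y ≤ G.dist u x + 1 := by
    intro x y h
    have h1 : G.dist x y ≤ 1 := by simpa using SimpleGraph.dist_le h.toWalk
    have := hconn.dist_triangle (u := u) (v := x) (w := y)
    omega
  constructor
  · intro v
    by_contra hcon
    push_neg at hcon
    obtain ⟨p, hp⟩ := hconn.exists_walk_length_eq_dist u v
    have hlen : 4 ≤ p.length := by omega
    have hd : ∀ i ≤ p.length, G.dist u (p.getVert i) = i := by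
      intro i hi
      refine le_antisymm ?_ ?_
      · clear hi
        induction i with
        | zero => simp
        | succ n ih =>
          rcases le_or_gt p.length n with hn | hn
          · rw [p.getVert_of_length_le (by omega)]
            omega
          · have := hstep _ _ (p.adj_getVert_succ hn)
            omega
      · have h1 := dist_getVert_right p i
        have h2 := hconn.dist_triangle (u := u) (v := p.getVert i) (w := v)
        omega
    set f : Fin 5 → V := fun k => p.getVert k.val with hf
    have hdk : ∀ k : Fin 5, G.dist u (f k) = k.val := by
      intro k
      exact hd k.val (by omega)
    have hinj : Function.Injective f := by
      intro a b hab
      have : (a : ℕ) = b := by rw [← hdk a, ← hdk b, hab]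
      exact Fin.ext this
    have hmap : ∀ a b : Fin 5, G.Adj (f a) (f b) ↔ (pathGraph 5).Adj a b := by
      intro a b
      rw [pathGraph_adj]
      constructor
      · intro h
        have h1 := hstep _ _ h
        have h2 := hstep _ _ h.symm
        rw [hdk a, hdk b] at h1 h2
        have hne : (a : ℕ) ≠ b := fun he => h.ne (congrArg f (Fin.ext he))
        omega
      · rintro (h | h)
        · have hb : (a : ℕ) < p.length := by omega
          have := p.adj_getVert_succ hb
          simpa [hf, h] using this
        · have hb : (b : ℕ) < p.length := by omega
          have := p.adj_getVert_succ hb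
          exact (by simpa [hf, h] using this : G.Adj (f b) (f a)).symm
    exact hP5.false ⟨⟨f, hinj⟩, (hmap _ _)⟩
  · rintro v i _ ⟨a, b, c, hab, hac, hbc, ⟨hva, _⟩, ⟨hvb, _⟩, ⟨hvc, _⟩, hnab, hnac, hnbc⟩
    have hnba : ¬ G.Adj b a := fun h => hnab h.symm
    have hnca : ¬ G.Adj c a := fun h => hnac h.symm
    have hncb : ¬ G.Adj c b := fun h => hnbc h.symm
    refine hclaw.false ⟨⟨![v, a, b, c], ?_⟩, @fun x y => ?_⟩
    · intro x y hxy
      fin_cases x <;> fin_cases y <;>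
        simp_all [hva.ne, hvb.ne, hvc.ne, hva.ne', hvb.ne', hvc.ne', hab.symm, hac.symm, hbc.symm]
    · change G.Adj (![v, a, b, c] x) (![v, a, b, c] y) ↔ _
      fin_cases x <;> fin_cases y <;>
        simp_all [_root_.starGraph, SimpleGraph.fromRel_adj, hva, hvb, hvc, hva.symm, hvb.symm, hvc.symm,
          Fin.ext_iff, -Fin.val_eq_zero_iff, (show ((3:Fin 4):ℕ) = 3 from rfl)]
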